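/- In Smoryński's Kripke model M_S, for any world n, any formula A(u) with one free variable u, parameters from D_n, and containing only the unary predicate symbol P, and any m_1, m_2 ≥ n+2: M_S, n ⊨ A(m_1) ↔ A(m_2). -/

import Mathlib

namespace PML

/-- Formulas of predicate modal logic, with propositional variables (language L''). -/
inductive Fml : Type
  | verum : Fml
  | falsum : Fml
  | pvar (q : ℕ) : Fml
  | pred (P : ℕ) (args : List ℕ) : Fml
  | neg (A : Fml) : Fml
  | imp (A B : Fml) : Fml
  | all (u : ℕ) (A : Fml) : Fml
  | box (A : Fml) : Fml

namespace Fml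

def lor (A B : Fml) : Fml := A.neg.imp B
def land (A B : Fml) : Fml := (A.imp B.neg).neg
def iff (A B : Fml) : Fml := (A.imp B).land (B.imp A)
def ex (u : ℕ) (A : Fml) : Fml := (Fml.all u A.neg).neg
def boxdot (A : Fml) : Fml := A.box.land A

def boxIter : ℕ → Fml → Fml
  | 0, A => A
  | n + 1, A => (boxIter n A).box

/-- Free variables. -/
def free : Fml → Finset ℕ
  | pred _ args => args.toFinset
  | neg A => A.free
  | imp A B => A.free ∪ B.free
  | all u A => A.free.erase u
  | box A => A.free
  | _ => ∅

/-- Bound variables. -/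
def bound : Fml → Finset ℕ
  | neg A => A.bound
  | imp A B => A.bound ∪ B.bound
  | all u A => insert u A.bound
  | box A => A.bound
  | _ => ∅

/-- Propositional variables occurring in a formula. -/
def pvars : Fml → Finset ℕ
  | pvar q => {q}
  | neg A => A.pvars
  | imp A B => A.pvars ∪ B.pvars
  | all _ A => A.pvars
  | box A => A.pvars
  | _ => ∅

/-- Predicate symbols occurring in a formula. -/
def preds : Fml → Finset ℕ
  | pred P _ => {P}
  | neg A => A.preds
  | imp A B => A.preds ∪ B.preds
  | all _ A => A.preds
  | box A => A.preds
  | _ => ∅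

/-- Predicate symbols together with the arity they are used with. -/
def predSig : Fml → Finset (ℕ × ℕ)
  | pred P args => {(P, args.length)}
  | neg A => A.predSig
  | imp A B => A.predSig ∪ B.predSig
  | all _ A => A.predSig
  | box A => A.predSig
  | _ => ∅

/-- Rename free occurrences of the variable `u` to `v`. -/
def rename : Fml → ℕ → ℕ → Fml
  | pred P args, u, v => pred P (args.map fun x => if x = u then v else x)
  | neg A, u, v => (A.rename u v).neg
  | imp A B, u, v => (A.rename u v).imp (B.rename u v)
  | all w A, u, v => if w = u then all w A else all w (A.rename u v)
  | box A, u, v => (A.rename u v).box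
  | A, _, _ => A

/-- Substitution of a formula for a propositional variable. -/
def psub : Fml → ℕ → Fml → Fml
  | pvar q, p, B => if q = p then B else pvar q
  | neg A, p, B => (A.psub p B).neg
  | imp A C, p, B => (A.psub p B).imp (C.psub p B)
  | all u A, p, B => all u (A.psub p B)
  | box A, p, B => (A.psub p B).box
  | A, _, _ => A

/-- Simultaneous substitution of formulas for all propositional variables. -/
def msub : Fml → (ℕ → Fml) → Fml
  | pvar q, σ => σ q
  | neg A, σ => (A.msub σ).neg
  | imp A C, σ => (A.msub σ).imp (C.msub σ)
  | all u A, σ => all u (A.msub σ)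
  | box A, σ => (A.msub σ).box
  | A, _ => A

/-- Depth-indexed substitution: occurrences of `p` at modal depth `i` are replaced by `σ i`. -/
def dsub : Fml → ℕ → (ℕ → Fml) → Fml
  | pvar q, p, σ => if q = p then σ 0 else pvar q
  | neg A, p, σ => (A.dsub p σ).neg
  | imp A C, p, σ => (A.dsub p σ).imp (C.dsub p σ)
  | all u A, p, σ => all u (A.dsub p σ)
  | box A, p, σ => (A.dsub p (fun i => σ (i + 1))).box
  | A, _, _ => A

/-- `A(p)[B_0,…,B_k]` for a list `[B_0,…,B_k]`. -/
def dsubL (A : Fml) (p : ℕ) (L : List Fml) : Fml := A.dsub p (fun i => L.getD i verum)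

/-- `A^{⊤(n)}`: replace every boxed subformula at modal depth `n` by `⊤`. -/
def eraseT : ℕ → Fml → Fml
  | 0, box _ => verum
  | n + 1, box A => (eraseT n A).box
  | n, neg A => (eraseT n A).neg
  | n, imp A B => (eraseT n A).imp (eraseT n B)
  | n, all u A => all u (eraseT n A)
  | _, A => A

/-- `occursAt p A d`: the propositional variable `p` occurs in `A` at modal depth `d`. -/
def occursAt (p : ℕ) : Fml → ℕ → Prop
  | pvar q, d => q = p ∧ d = 0
  | neg A, d => occursAt p A d
  | imp A B, d => occursAt p A d ∨ occursAt p B d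
  | all _ A, d => occursAt p A d
  | box A, d => ∃ d', d = d' + 1 ∧ occursAt p A d'
  | _, _ => False

/-- `A` is modalized in `p`: no occurrence of `p` at depth `0`. -/
def Modalized (p : ℕ) (A : Fml) : Prop := ¬ occursAt p A 0

/-- Conjunction of a list of formulas. -/
def conj : List Fml → Fml
  | [] => verum
  | A :: L => A.land (conj L)

/-- The canonical fixed-point sequence:
`A_0 := A^{⊤(0)}(p)[⊤]`, `A_{k+1} := A^{⊤(k+1)}(p)[⊤, A_k, …, A_0]`. -/
def fpSeq (p : ℕ) (A : Fml) : ℕ → Fml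
  | 0 => (eraseT 0 A).dsub p (fun _ => verum)
  | n + 1 => (eraseT (n + 1) A).dsub p
      (fun i => match i with
        | 0 => verum
        | j + 1 => fpSeq p A (n - j))
  termination_by k => k
  decreasing_by omega

end Fml

open Fml

/-- Axioms of predicate logic, together with the modal distribution axiom K. -/
inductive Ax : Fml → Prop
  | imp1 (A B : Fml) : Ax (A.imp (B.imp A))
  | imp2 (A B C : Fml) : Ax ((A.imp (B.imp C)).imp ((A.imp B).imp (A.imp C)))
  | contra (A B : Fml) : Ax ((A.neg.imp B.neg).imp (B.imp A))
  | verum : Ax Fml.verum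
  | exfalso (A : Fml) : Ax (Fml.falsum.imp A)
  | negE (A : Fml) : Ax (A.neg.imp (A.imp Fml.falsum))
  | negI (A : Fml) : Ax ((A.imp Fml.falsum).imp A.neg)
  | allE (A : Fml) (u v : ℕ) (h : v ∉ A.bound) : Ax ((Fml.all u A).imp (A.rename u v))
  | allK (A B : Fml) (u : ℕ) :
      Ax ((Fml.all u (A.imp B)).imp ((Fml.all u A).imp (Fml.all u B)))
  | allV (A : Fml) (u : ℕ) (h : u ∉ A.free) : Ax (A.imp (Fml.all u A))
  | k (A B : Fml) : Ax (((A.imp B).box).imp (A.box.imp B.box))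

/-- Hilbert-style provability from the base axioms plus extra axioms `Ext`,
closed under modus ponens, necessitation and generalization. -/
inductive Prf (Ext : Fml → Prop) : Fml → Prop
  | ax {A : Fml} : Ax A → Prf Ext A
  | ext {A : Fml} : Ext A → Prf Ext A
  | mp {A B : Fml} : Prf Ext (A.imp B) → Prf Ext A → Prf Ext B
  | nec {A : Fml} : Prf Ext A → Prf Ext A.box
  | gen {A : Fml} (u : ℕ) : Prf Ext A → Prf Ext (Fml.all u A)

/-- The smallest normal predicate modal logic QK. -/
def QK : Fml → Prop := Prf (fun _ => False)

inductive Ax4 : Fml → Prop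
  | four (A : Fml) : Ax4 (A.box.imp A.box.box)

/-- QK4 : QK plus the axiom 4. -/
def QK4 : Fml → Prop := Prf Ax4

inductive AxL : Fml → Prop
  | lob (A : Fml) : AxL (((A.box.imp A).box).imp A.box)

/-- QGL : QK plus Löb's axiom. -/
def QGL : Fml → Prop := Prf AxL

/-- NQGL : QK4 plus the infinitary rule BL. -/
inductive NQGL : Fml → Prop
  | ax {A : Fml} : Ax A → NQGL A
  | four (A : Fml) : NQGL (A.box.imp A.box.box)
  | mp {A B : Fml} : NQGL (A.imp B) → NQGL A → NQGL B
  | nec {A : Fml} : NQGL A → NQGL A.box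
  | gen {A : Fml} (u : ℕ) : NQGL A → NQGL (Fml.all u A)
  | bl {A : Fml} : (∀ n : ℕ, NQGL ((boxIter (n + 1) Fml.falsum).imp A)) → NQGL A

/-- Σ-formulas. -/
inductive IsSigma : Fml → Prop
  | box (A : Fml) : IsSigma A.box
  | lor {A B : Fml} : IsSigma A → IsSigma B → IsSigma (A.lor B)
  | land {A B : Fml} : IsSigma A → IsSigma B → IsSigma (A.land B)
  | ex {A : Fml} (u : ℕ) : IsSigma A → IsSigma (Fml.ex u A)

/- ## Kripke semantics -/

structure KFrame where
  W : Type
  R : W → W → Prop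
  Dom : Type
  D : W → Set Dom
  Dne : ∀ w, (D w).Nonempty
  mono : ∀ {w w'}, R w w' → D w ⊆ D w'

structure KModel extends KFrame where
  I : W → ℕ → List Dom → Prop
  V : W → ℕ → Prop

def Sat (M : KModel) : Fml → M.W → (ℕ → M.Dom) → Prop
  | .verum, _, _ => True
  | .falsum, _, _ => False
  | .pvar q, w, _ => M.V w q
  | .pred P args, w, ρ => M.I w P (args.map ρ)
  | .neg A, w, ρ => ¬ Sat M A w ρ
  | .imp A B, w, ρ => Sat M A w ρ → Sat M B w ρ
  | .all u A, w, ρ => ∀ a ∈ M.D w, Sat M A w (Function.update ρ u a)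
  | .box A, w, ρ => ∀ v, M.R w v → Sat M A v ρ

/-- Validity in a model. -/
def MVal (M : KModel) (A : Fml) : Prop :=
  ∀ (w : M.W) (ρ : ℕ → M.Dom), (∀ x, ρ x ∈ M.D w) → Sat M A w ρ

/-- Validity on a frame. -/
def FVal (F : KFrame) (A : Fml) : Prop :=
  ∀ (I : F.W → ℕ → List F.Dom → Prop) (V : F.W → ℕ → Prop),
    MVal { toKFrame := F, I := I, V := V } A

/-- Smoryński's model. -/
def MS : KModel where
  W := ℕ
  R := fun m n => n < m
  Dom := ℕ
  D := fun n => {m | n ≤ m}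
  Dne := fun n => ⟨n, le_refl n⟩
  mono := by intro w w' h x hx; simp only [Set.mem_setOf_eq] at *; omega
  I := fun w P L => P = 0 ∧ ∀ m ∈ L, m ≠ w + 1
  V := fun _ _ => False

/-- The finite truncations of Smoryński's model. -/
def Mk (k : ℕ) : KModel where
  W := Fin (k + 1)
  R := fun m n => (n : ℕ) < (m : ℕ)
  Dom := ℕ
  D := fun n => {m | (n : ℕ) ≤ m ∧ m ≤ k + 2}
  Dne := fun n => ⟨(n : ℕ), by simp only [Set.mem_setOf_eq]; have := n.isLt; omega⟩
  mono := by intro w w' h x hx; simp only [Set.mem_setOf_eq] at *; omega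
  I := fun w P L => P = 0 ∧ ∀ m ∈ L, m ≠ (w : ℕ) + 1
  V := fun _ _ => False

/-- `A` contains only the unary predicate symbol `P` (coded `0`) and no propositional variables. -/
def OnlyP (A : Fml) : Prop := A.predSig ⊆ {(0, 1)} ∧ A.pvars = ∅

/-- The atomic formula `P(u)`. -/
def Pat (u : ℕ) : Fml := Fml.pred 0 [u]

/-- `h(F) ≤ n`: there is no chain of `n+1` successive `R`-steps. -/
def HeightLe (F : KFrame) (n : ℕ) : Prop :=
  ∀ c : ℕ → F.W, ¬ ∀ i < n + 1, F.R (c i) (c (i + 1))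

end PML

open PML PML.Fml in
theorem stmt12_aux (A : Fml) : ∀ (w : ℕ) (ρ₁ ρ₂ : ℕ → ℕ),
    (∀ x, ρ₁ x = ρ₂ x ∨ (w + 2 ≤ ρ₁ x ∧ w + 2 ≤ ρ₂ x)) →
    (Sat MS A w ρ₁ ↔ Sat MS A w ρ₂) := by
  induction A with
  | verum => simp [Sat]
  | falsum => simp [Sat]
  | pvar q => simp [Sat, MS]
  | pred P args =>
    intro w ρ₁ ρ₂ h
    simp only [Sat, MS, List.mem_map]
    constructor <;> rintro ⟨hP, hm⟩ <;> refine ⟨hP, ?_⟩ <;>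
      rintro m ⟨x, hx, rfl⟩ <;> rcases h x with he | ⟨h1, h2⟩
    · rw [← he]; exact hm _ ⟨x, hx, rfl⟩
    · omega
    · rw [he]; exact hm _ ⟨x, hx, rfl⟩
    · omega
  | neg A ih =>
    intro w ρ₁ ρ₂ h; simp only [Sat]; rw [ih w ρ₁ ρ₂ h]
  | imp A B ihA ihB =>
    intro w ρ₁ ρ₂ h; simp only [Sat]; rw [ihA w ρ₁ ρ₂ h, ihB w ρ₁ ρ₂ h]
  | all v A ih =>
    intro w ρ₁ ρ₂ h
    simp only [Sat]
    constructor <;> intro hs a ha <;>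
      [refine (ih w (Function.update ρ₁ v a) _ ?_).mp ?_; refine (ih w _ (Function.update ρ₂ v a) ?_).mpr ?_] <;>
      first
        | exact hs a ha
        | · intro x
            rcases eq_or_ne x v with rfl | hx
            · exact Or.inl ((Function.update_self (f := ρ₁) x (a : ℕ)).trans (Function.update_self (f := ρ₂) x (a : ℕ)).symm)
            · have := h x; rwa [← Function.update_of_ne hx (a : ℕ) ρ₁, ← Function.update_of_ne hx (a : ℕ) ρ₂] at this
  | box A ih =>
    intro w ρ₁ ρ₂ h
    simp only [Sat]
    have : ∀ v, MS.R w v → (Sat MS A v ρ₁ ↔ Sat MS A v ρ₂) := by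
      intro v hv
      apply ih
      intro x
      rcases h x with he | ⟨h1, h2⟩
      · exact Or.inl he
      · right; simp only [MS] at hv; omega
    constructor <;> intro hs v hv <;> [rw [← this v hv]; rw [this v hv]] <;> exact hs v hv

open PML PML.Fml in
/-- in Smoryński's model, formulas in P only cannot distinguish
elements ≥ n+2 at world n. -/
theorem stmt12 (n u m₁ m₂ : ℕ) (A : Fml) (ρ : ℕ → ℕ)
    (hA : OnlyP A) (hρ : ∀ x, ρ x ∈ MS.D n)
    (h₁ : n + 2 ≤ m₁) (h₂ : n + 2 ≤ m₂) :
    Sat MS A n (Function.update ρ u m₁) ↔ Sat MS A n (Function.update ρ u m₂) := by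
  apply stmt12_aux
  intro x
  rcases eq_or_ne x u with rfl | hx
  · right; show n + 2 ≤ Function.update ρ x m₁ x ∧ n + 2 ≤ Function.update ρ x m₂ x; simp [h₁, h₂]
  · left; show Function.update ρ u m₁ x = Function.update ρ u m₂ x; simp [Function.update_of_ne hx]
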